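/- Let L' be any fragment of ML(Prop,Act) and let 𝒫, 𝒩 be finite sets of Kripke structures over (Prop, Act). If there is a (𝒫,𝒩)-separating L'-formula, then there is one of size at most 2^n, where n := Σ_{K ∈ 𝒫∪𝒩} |Q_K| is the total number of states of the structures in the sample. -/

import Mathlib

open scoped Classical

/-- Formulas of modal logic `ML(Prop, Act)`:
`φ ::= p | ¬φ | φ∨φ | φ∧φ | ⟨a⟩^{≥k}φ (k ≥ 1) | [a]φ`. -/
inductive MLFormula (P A : Type) : Type
  | atom : P → MLFormula P A
  | not : MLFormula P A → MLFormula P A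
  | or : MLFormula P A → MLFormula P A → MLFormula P A
  | and : MLFormula P A → MLFormula P A → MLFormula P A
  | dia : A → ℕ+ → MLFormula P A → MLFormula P A
  | box : A → MLFormula P A → MLFormula P A

/-- A Kripke structure over `(P, A)`: a finite non-empty set of states, a
non-empty set of initial states, transitions labelled by actions, and a
labelling of states by propositions. -/
structure Kripke (P A : Type) where
  Q : Type
  [finQ : Fintype Q]
  neQ : Nonempty Q
  I : Set Q
  neI : I.Nonempty
  δ : Q → A → Set Q
  π : Q → Set P

attribute [instance] Kripke.finQ

/-- Satisfaction of a modal formula at a state of a Kripke structure. -/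
def MLsat {P A : Type} (K : Kripke P A) : MLFormula P A → K.Q → Prop
  | .atom p, q => p ∈ K.π q
  | .not φ, q => ¬ MLsat K φ q
  | .or φ ψ, q => MLsat K φ q ∨ MLsat K ψ q
  | .and φ ψ, q => MLsat K φ q ∧ MLsat K ψ q
  | .dia a k φ, q => (k : ℕ) ≤ (K.δ q a ∩ {q' | MLsat K φ q'}).ncard
  | .box a φ, q => ∀ q' ∈ K.δ q a, MLsat K φ q'

/-- `K ⊨ φ`: every initial state satisfies `φ`. -/
def MLsatK {P A : Type} (K : Kripke P A) (φ : MLFormula P A) : Prop :=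
  ∀ q ∈ K.I, MLsat K φ q

/-- The semantic value of a formula in `K`: the set of states satisfying it. -/
def semK {P A : Type} (K : Kripke P A) (φ : MLFormula P A) : Set K.Q :=
  {q | MLsat K φ q}

/-- A fragment of `ML(Prop, Act)`: a subset of the operators
(atomic propositions `p`, `¬`, `∨`, `∧`, `⟨a⟩^{≥k}`, `[a]`). -/
structure MLFragment (P A : Type) where
  atoms : Set P
  hasNot : Prop
  hasOr : Prop
  hasAnd : Prop
  dias : Set (A × ℕ+)
  boxes : Set A

/-- A formula belongs to the fragment if it is built using only its operators. -/
def MLFragment.Mem {P A : Type} (F : MLFragment P A) : MLFormula P A → Prop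
  | .atom p => p ∈ F.atoms
  | .not φ => F.hasNot ∧ F.Mem φ
  | .or φ ψ => F.hasOr ∧ F.Mem φ ∧ F.Mem ψ
  | .and φ ψ => F.hasAnd ∧ F.Mem φ ∧ F.Mem ψ
  | .dia a k φ => (a, k) ∈ F.dias ∧ F.Mem φ
  | .box a φ => a ∈ F.boxes ∧ F.Mem φ

/-- The set of subformulas of a modal formula. -/
def MLSub {P A : Type} : MLFormula P A → Set (MLFormula P A)
  | .atom p => {.atom p}
  | .not φ => insert (.not φ) (MLSub φ)
  | .or φ ψ => insert (.or φ ψ) (MLSub φ ∪ MLSub ψ)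
  | .and φ ψ => insert (.and φ ψ) (MLSub φ ∪ MLSub ψ)
  | .dia a k φ => insert (.dia a k φ) (MLSub φ)
  | .box a φ => insert (.box a φ) (MLSub φ)

/-- The (syntax-DAG) size of a modal formula: its number of distinct subformulas. -/
noncomputable def MLsz {P A : Type} (φ : MLFormula P A) : ℕ := (MLSub φ).ncard

section MLAux

variable {P A : Type}

/-- Constructor-count size of a formula. -/
def csize : MLFormula P A → ℕ
  | .atom _ => 1
  | .not φ => csize φ + 1
  | .or φ ψ => csize φ + csize ψ + 1
  | .and φ ψ => csize φ + csize ψ + 1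
  | .dia _ _ φ => csize φ + 1
  | .box _ φ => csize φ + 1

lemma self_mem_MLSub (φ : MLFormula P A) : φ ∈ MLSub φ := by
  cases φ <;> simp [MLSub]

lemma MLSub_finite (φ : MLFormula P A) : (MLSub φ).Finite := by
  induction φ with
  | atom p => simp [MLSub]
  | not φ ih => exact ih.insert _
  | or φ ψ ih1 ih2 => exact (ih1.union ih2).insert _
  | and φ ψ ih1 ih2 => exact (ih1.union ih2).insert _
  | dia a k φ ih => exact ih.insert _
  | box a φ ih => exact ih.insert _

lemma csize_le_of_mem_MLSub {γ φ : MLFormula P A} (h : γ ∈ MLSub φ) :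
    csize γ ≤ csize φ := by
  induction φ with
  | atom p => simp [MLSub] at h; subst h; simp
  | not φ ih =>
      rcases h with h | h
      · subst h; exact le_rfl
      · exact (ih h).trans (by simp [csize])
  | or φ ψ ih1 ih2 =>
      rcases h with h | h | h
      · subst h; exact le_rfl
      · exact (ih1 h).trans (by simp [csize]; omega)
      · exact (ih2 h).trans (by simp [csize]; omega)
  | and φ ψ ih1 ih2 =>
      rcases h with h | h | h
      · subst h; exact le_rfl
      · exact (ih1 h).trans (by simp [csize]; omega)
      · exact (ih2 h).trans (by simp [csize]; omega)
  | dia a k φ ih =>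
      rcases h with h | h
      · subst h; exact le_rfl
      · exact (ih h).trans (by simp [csize])
  | box a φ ih =>
      rcases h with h | h
      · subst h; exact le_rfl
      · exact (ih h).trans (by simp [csize])

lemma eq_or_csize_lt_of_mem_MLSub {γ φ : MLFormula P A} (h : γ ∈ MLSub φ) :
    γ = φ ∨ csize γ < csize φ := by
  induction φ with
  | atom p => simp [MLSub] at h; exact Or.inl h
  | not φ ih =>
      rcases h with h | h
      · exact Or.inl h
      · exact Or.inr ((csize_le_of_mem_MLSub h).trans_lt (by simp [csize]))
  | or φ ψ ih1 ih2 =>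
      rcases h with h | h | h
      · exact Or.inl h
      · exact Or.inr ((csize_le_of_mem_MLSub h).trans_lt (by simp [csize]))
      · exact Or.inr ((csize_le_of_mem_MLSub h).trans_lt (by simp [csize]))
  | and φ ψ ih1 ih2 =>
      rcases h with h | h | h
      · exact Or.inl h
      · exact Or.inr ((csize_le_of_mem_MLSub h).trans_lt (by simp [csize]))
      · exact Or.inr ((csize_le_of_mem_MLSub h).trans_lt (by simp [csize]))
  | dia a k φ ih =>
      rcases h with h | h
      · exact Or.inl h
      · exact Or.inr ((csize_le_of_mem_MLSub h).trans_lt (by simp [csize]))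
  | box a φ ih =>
      rcases h with h | h
      · exact Or.inl h
      · exact Or.inr ((csize_le_of_mem_MLSub h).trans_lt (by simp [csize]))

lemma MLSub_trans {γ ψ φ : MLFormula P A} (h1 : γ ∈ MLSub ψ) (h2 : ψ ∈ MLSub φ) :
    γ ∈ MLSub φ := by
  induction φ with
  | atom p => simp [MLSub] at h2 ⊢; subst h2; simpa [MLSub] using h1
  | not φ ih =>
      rcases h2 with h2 | h2
      · subst h2; exact h1
      · exact Or.inr (ih h2)
  | or φ ψ' ih1 ih2 =>
      rcases h2 with h2 | h2 | h2
      · subst h2; exact h1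
      · exact Or.inr (Or.inl (ih1 h2))
      · exact Or.inr (Or.inr (ih2 h2))
  | and φ ψ' ih1 ih2 =>
      rcases h2 with h2 | h2 | h2
      · subst h2; exact h1
      · exact Or.inr (Or.inl (ih1 h2))
      · exact Or.inr (Or.inr (ih2 h2))
  | dia a k φ ih =>
      rcases h2 with h2 | h2
      · subst h2; exact h1
      · exact Or.inr (ih h2)
  | box a φ ih =>
      rcases h2 with h2 | h2
      · subst h2; exact h1
      · exact Or.inr (ih h2)

lemma Mem_of_mem_MLSub {F : MLFragment P A} {γ φ : MLFormula P A}
    (hφ : F.Mem φ) (h : γ ∈ MLSub φ) : F.Mem γ := by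
  induction φ with
  | atom p => simp [MLSub] at h; subst h; exact hφ
  | not φ ih =>
      rcases h with h | h
      · subst h; exact hφ
      · exact ih hφ.2 h
  | or φ ψ ih1 ih2 =>
      rcases h with h | h | h
      · subst h; exact hφ
      · exact ih1 hφ.2.1 h
      · exact ih2 hφ.2.2 h
  | and φ ψ ih1 ih2 =>
      rcases h with h | h | h
      · subst h; exact hφ
      · exact ih1 hφ.2.1 h
      · exact ih2 hφ.2.2 h
  | dia a k φ ih =>
      rcases h with h | h
      · subst h; exact hφ
      · exact ih hφ.2 h
  | box a φ ih =>
      rcases h with h | h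
      · subst h; exact hφ
      · exact ih hφ.2 h

/-- Substitute `α` for every occurrence of the subformula `β`. -/
noncomputable def msubst (β α : MLFormula P A) : MLFormula P A → MLFormula P A
  | .atom p => if MLFormula.atom p = β then α else .atom p
  | .not φ => if MLFormula.not φ = β then α else .not (msubst β α φ)
  | .or φ ψ => if MLFormula.or φ ψ = β then α else .or (msubst β α φ) (msubst β α ψ)
  | .and φ ψ => if MLFormula.and φ ψ = β then α else .and (msubst β α φ) (msubst β α ψ)
  | .dia a k φ => if MLFormula.dia a k φ = β then α else .dia a k (msubst β α φ)
  | .box a φ => if MLFormula.box a φ = β then α else .box a (msubst β α φ)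

lemma msubst_self (β α : MLFormula P A) : msubst β α β = α := by
  cases β <;> simp [msubst]

lemma msubst_eq_self {β : MLFormula P A} (α : MLFormula P A) {φ : MLFormula P A}
    (h : β ∉ MLSub φ) : msubst β α φ = φ := by
  induction φ with
  | atom p =>
      have : MLFormula.atom p ≠ β := fun he => h (he ▸ self_mem_MLSub _)
      simp [msubst, this]
  | not φ ih =>
      have h1 : MLFormula.not φ ≠ β := fun he => h (he ▸ self_mem_MLSub _)
      have h2 : β ∉ MLSub φ := fun hb => h (Or.inr hb)
      simp [msubst, h1, ih h2]
  | or φ ψ ih1 ih2 =>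
      have h1 : MLFormula.or φ ψ ≠ β := fun he => h (he ▸ self_mem_MLSub _)
      have h2 : β ∉ MLSub φ := fun hb => h (Or.inr (Or.inl hb))
      have h3 : β ∉ MLSub ψ := fun hb => h (Or.inr (Or.inr hb))
      simp [msubst, h1, ih1 h2, ih2 h3]
  | and φ ψ ih1 ih2 =>
      have h1 : MLFormula.and φ ψ ≠ β := fun he => h (he ▸ self_mem_MLSub _)
      have h2 : β ∉ MLSub φ := fun hb => h (Or.inr (Or.inl hb))
      have h3 : β ∉ MLSub ψ := fun hb => h (Or.inr (Or.inr hb))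
      simp [msubst, h1, ih1 h2, ih2 h3]
  | dia a k φ ih =>
      have h1 : MLFormula.dia a k φ ≠ β := fun he => h (he ▸ self_mem_MLSub _)
      have h2 : β ∉ MLSub φ := fun hb => h (Or.inr hb)
      simp [msubst, h1, ih h2]
  | box a φ ih =>
      have h1 : MLFormula.box a φ ≠ β := fun he => h (he ▸ self_mem_MLSub _)
      have h2 : β ∉ MLSub φ := fun hb => h (Or.inr hb)
      simp [msubst, h1, ih h2]

lemma MLSub_msubst_subset (β α φ : MLFormula P A) :
    MLSub (msubst β α φ) ⊆ msubst β α '' MLSub φ ∪ MLSub α := by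
  induction φ with
  | atom p =>
      by_cases hb : MLFormula.atom p = β
      · subst hb; rw [msubst_self]; exact fun γ hγ => Or.inr hγ
      · simp only [msubst, hb, if_false]
        intro γ hγ
        simp [MLSub] at hγ; subst hγ
        exact Or.inl ⟨.atom p, self_mem_MLSub _, by simp [msubst, hb]⟩
  | not φ ih =>
      by_cases hb : MLFormula.not φ = β
      · rw [hb, msubst_self]; exact fun γ hγ => Or.inr hγ
      · simp only [msubst, hb, if_false]
        intro γ hγ
        rcases hγ with hγ | hγ
        · subst hγ
          exact Or.inl ⟨.not φ, self_mem_MLSub _, by simp [msubst, hb]⟩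
        · rcases ih hγ with ⟨δ, hδ, hδ2⟩ | h'
          · exact Or.inl ⟨δ, Or.inr hδ, hδ2⟩
          · exact Or.inr h'
  | or φ ψ ih1 ih2 =>
      by_cases hb : MLFormula.or φ ψ = β
      · rw [hb, msubst_self]; exact fun γ hγ => Or.inr hγ
      · simp only [msubst, hb, if_false]
        intro γ hγ
        rcases hγ with hγ | hγ | hγ
        · subst hγ
          exact Or.inl ⟨.or φ ψ, self_mem_MLSub _, by simp [msubst, hb]⟩
        · rcases ih1 hγ with ⟨δ, hδ, hδ2⟩ | h'
          · exact Or.inl ⟨δ, Or.inr (Or.inl hδ), hδ2⟩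
          · exact Or.inr h'
        · rcases ih2 hγ with ⟨δ, hδ, hδ2⟩ | h'
          · exact Or.inl ⟨δ, Or.inr (Or.inr hδ), hδ2⟩
          · exact Or.inr h'
  | and φ ψ ih1 ih2 =>
      by_cases hb : MLFormula.and φ ψ = β
      · rw [hb, msubst_self]; exact fun γ hγ => Or.inr hγ
      · simp only [msubst, hb, if_false]
        intro γ hγ
        rcases hγ with hγ | hγ | hγ
        · subst hγ
          exact Or.inl ⟨.and φ ψ, self_mem_MLSub _, by simp [msubst, hb]⟩
        · rcases ih1 hγ with ⟨δ, hδ, hδ2⟩ | h'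
          · exact Or.inl ⟨δ, Or.inr (Or.inl hδ), hδ2⟩
          · exact Or.inr h'
        · rcases ih2 hγ with ⟨δ, hδ, hδ2⟩ | h'
          · exact Or.inl ⟨δ, Or.inr (Or.inr hδ), hδ2⟩
          · exact Or.inr h'
  | dia a k φ ih =>
      by_cases hb : MLFormula.dia a k φ = β
      · rw [hb, msubst_self]; exact fun γ hγ => Or.inr hγ
      · simp only [msubst, hb, if_false]
        intro γ hγ
        rcases hγ with hγ | hγ
        · subst hγ
          exact Or.inl ⟨.dia a k φ, self_mem_MLSub _, by simp [msubst, hb]⟩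
        · rcases ih hγ with ⟨δ, hδ, hδ2⟩ | h'
          · exact Or.inl ⟨δ, Or.inr hδ, hδ2⟩
          · exact Or.inr h'
  | box a φ ih =>
      by_cases hb : MLFormula.box a φ = β
      · rw [hb, msubst_self]; exact fun γ hγ => Or.inr hγ
      · simp only [msubst, hb, if_false]
        intro γ hγ
        rcases hγ with hγ | hγ
        · subst hγ
          exact Or.inl ⟨.box a φ, self_mem_MLSub _, by simp [msubst, hb]⟩
        · rcases ih hγ with ⟨δ, hδ, hδ2⟩ | h'
          · exact Or.inl ⟨δ, Or.inr hδ, hδ2⟩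
          · exact Or.inr h'

lemma Mem_msubst {F : MLFragment P A} {β α φ : MLFormula P A}
    (hα : F.Mem α) (hφ : F.Mem φ) : F.Mem (msubst β α φ) := by
  induction φ with
  | atom p =>
      by_cases hb : MLFormula.atom p = β <;> simp [msubst, hb, hα, hφ]
  | not φ ih =>
      by_cases hb : MLFormula.not φ = β
      · simp [msubst, hb, hα]
      · simp only [msubst, hb, if_false]
        exact ⟨hφ.1, ih hφ.2⟩
  | or φ ψ ih1 ih2 =>
      by_cases hb : MLFormula.or φ ψ = β
      · simp [msubst, hb, hα]
      · simp only [msubst, hb, if_false]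
        exact ⟨hφ.1, ih1 hφ.2.1, ih2 hφ.2.2⟩
  | and φ ψ ih1 ih2 =>
      by_cases hb : MLFormula.and φ ψ = β
      · simp [msubst, hb, hα]
      · simp only [msubst, hb, if_false]
        exact ⟨hφ.1, ih1 hφ.2.1, ih2 hφ.2.2⟩
  | dia a k φ ih =>
      by_cases hb : MLFormula.dia a k φ = β
      · simp [msubst, hb, hα]
      · simp only [msubst, hb, if_false]
        exact ⟨hφ.1, ih hφ.2⟩
  | box a φ ih =>
      by_cases hb : MLFormula.box a φ = β
      · simp [msubst, hb, hα]
      · simp only [msubst, hb, if_false]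
        exact ⟨hφ.1, ih hφ.2⟩

lemma MLsat_msubst {K : Kripke P A} {β α : MLFormula P A}
    (heq : ∀ q, MLsat K α q ↔ MLsat K β q) (φ : MLFormula P A) (q : K.Q) :
    MLsat K (msubst β α φ) q ↔ MLsat K φ q := by
  induction φ generalizing q with
  | atom p =>
      by_cases hb : MLFormula.atom p = β
      · rw [hb, msubst_self]; exact heq q
      · simp [msubst, hb]
  | not φ ih =>
      by_cases hb : MLFormula.not φ = β
      · rw [hb, msubst_self]; exact heq q
      · simp only [msubst, hb, if_false, MLsat]
        exact not_congr (ih q)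
  | or φ ψ ih1 ih2 =>
      by_cases hb : MLFormula.or φ ψ = β
      · rw [hb, msubst_self]; exact heq q
      · simp only [msubst, hb, if_false, MLsat]
        exact or_congr (ih1 q) (ih2 q)
  | and φ ψ ih1 ih2 =>
      by_cases hb : MLFormula.and φ ψ = β
      · rw [hb, msubst_self]; exact heq q
      · simp only [msubst, hb, if_false, MLsat]
        exact and_congr (ih1 q) (ih2 q)
  | dia a k φ ih =>
      by_cases hb : MLFormula.dia a k φ = β
      · rw [hb, msubst_self]; exact heq q
      · simp only [msubst, hb, if_false, MLsat]
        have : {q' | MLsat K (msubst β α φ) q'} = {q' | MLsat K φ q'} := by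
          ext q'; exact ih q'
        rw [this]
  | box a φ ih =>
      by_cases hb : MLFormula.box a φ = β
      · rw [hb, msubst_self]; exact heq q
      · simp only [msubst, hb, if_false, MLsat]
        exact forall_congr' fun q' => imp_congr Iff.rfl (ih q')

end MLAux

/-- **Corollary.** For any fragment of `ML(Prop, Act)` and any sample `(Pos, Neg)` of
Kripke structures: if some fragment formula separates the sample, then one of size
at most `2^n` does, where `n` is the total number of states of the sample. -/
theorem ml_separating_size (P A : Type) (hP : Nonempty P) (hA : Nonempty A)
    (F : MLFragment P A) (Pos Neg : Finset (Kripke P A)) :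
    (∃ φ : MLFormula P A, F.Mem φ ∧
        (∀ K ∈ Pos, MLsatK K φ) ∧ (∀ K ∈ Neg, ¬ MLsatK K φ)) →
    ∃ φ : MLFormula P A, F.Mem φ ∧
        (∀ K ∈ Pos, MLsatK K φ) ∧ (∀ K ∈ Neg, ¬ MLsatK K φ) ∧
        MLsz φ ≤ 2 ^ (∑ K ∈ Pos ∪ Neg, Fintype.card K.Q) := by
  intro ⟨φ0, h0⟩
  set s : Finset (Kripke P A) := Pos ∪ Neg with hs
  set n : ℕ := ∑ K ∈ s, Fintype.card K.Q with hn
  let Sep : MLFormula P A → Prop := fun φ =>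
    F.Mem φ ∧ (∀ K ∈ Pos, MLsatK K φ) ∧ (∀ K ∈ Neg, ¬ MLsatK K φ)
  have hex : ∃ m, ∃ φ, Sep φ ∧ MLsz φ = m := ⟨MLsz φ0, φ0, h0, rfl⟩
  obtain ⟨φ, hSep, hsz⟩ := Nat.find_spec hex
  refine ⟨φ, hSep.1, hSep.2.1, hSep.2.2, ?_⟩
  by_contra hbig
  push_neg at hbig
  -- the space of semantic vectors
  let V := ∀ K : {x // x ∈ s}, Set (K.1.Q)
  have hV : Fintype.card V = 2 ^ n := by
    rw [Fintype.card_pi]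
    calc ∏ K : {x // x ∈ s}, Fintype.card (Set K.1.Q)
        = ∏ K : {x // x ∈ s}, 2 ^ Fintype.card K.1.Q := by
          simp [Fintype.card_set]
      _ = ∏ K ∈ s, 2 ^ Fintype.card K.Q := Finset.prod_coe_sort s (fun K => 2 ^ Fintype.card K.Q)
      _ = 2 ^ n := by rw [hn, Finset.prod_pow_eq_pow_sum]
  let g : MLFormula P A → V := fun γ K => semK K.1 γ
  let T : Finset (MLFormula P A) := (MLSub_finite φ).toFinset
  have hTcard : T.card = MLsz φ := (Set.ncard_eq_toFinset_card _ (MLSub_finite φ)).symm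
  have hc : (Finset.univ : Finset V).card < T.card := by
    rw [Finset.card_univ, hV, hTcard]; exact hbig
  obtain ⟨α, hαT, β, hβT, hne, hg⟩ :=
    Finset.exists_ne_map_eq_of_card_lt_of_maps_to hc (fun a _ => Finset.mem_univ (g a))
  have hαm : α ∈ MLSub φ := (Set.Finite.mem_toFinset _).mp hαT
  have hβm : β ∈ MLSub φ := (Set.Finite.mem_toFinset _).mp hβT
  have hsem : ∀ K ∈ s, ∀ q, MLsat K α q ↔ MLsat K β q := by
    intro K hK q
    have h := congrFun hg ⟨K, hK⟩
    simpa [g, semK, Set.ext_iff] using Set.ext_iff.mp h q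
  -- key claim: distinct semantically-equal subformulas yield a contradiction
  have key : ∀ α β : MLFormula P A, α ∈ MLSub φ → β ∈ MLSub φ → α ≠ β →
      β ∉ MLSub α → (∀ K ∈ s, ∀ q, MLsat K α q ↔ MLsat K β q) → False := by
    intro α β hαm hβm hne hnm hsem
    set φ' := msubst β α φ with hφ'
    have hsub1 : MLSub α ⊆ msubst β α '' MLSub φ := by
      intro γ hγ
      exact ⟨γ, MLSub_trans hγ hαm, msubst_eq_self α fun hb => hnm (MLSub_trans hb hγ)⟩
    have hsub2 : msubst β α '' MLSub φ ⊆ msubst β α '' (MLSub φ \ {β}) := by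
      rintro _ ⟨γ, hγ, rfl⟩
      by_cases hgb : γ = β
      · subst hgb
        exact ⟨α, ⟨hαm, hne⟩, (msubst_eq_self α hnm).trans (msubst_self γ α).symm⟩
      · exact ⟨γ, ⟨hγ, hgb⟩, rfl⟩
    have h1 : MLSub φ' ⊆ msubst β α '' (MLSub φ \ {β}) := by
      intro γ hγ
      rcases MLSub_msubst_subset β α φ hγ with h | h
      · exact hsub2 h
      · exact hsub2 (hsub1 h)
    have hlt : MLsz φ' < MLsz φ := by
      calc MLsz φ' = (MLSub φ').ncard := rfl
        _ ≤ (msubst β α '' (MLSub φ \ {β})).ncard :=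
            Set.ncard_le_ncard h1 (((MLSub_finite φ).diff).image _)
        _ ≤ (MLSub φ \ {β}).ncard := Set.ncard_image_le ((MLSub_finite φ).diff)
        _ < (MLSub φ).ncard :=
            Set.ncard_lt_ncard (Set.sdiff_singleton_ssubset.mpr hβm) (MLSub_finite φ)
    have hSep' : Sep φ' := by
      refine ⟨Mem_msubst (Mem_of_mem_MLSub hSep.1 hαm) hSep.1, ?_, ?_⟩
      · intro K hK q hq
        exact (MLsat_msubst (hsem K (Finset.mem_union_left _ hK)) φ q).mpr
          (hSep.2.1 K hK q hq)
      · intro K hK hcon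
        refine hSep.2.2 K hK fun q hq => ?_
        exact (MLsat_msubst (hsem K (Finset.mem_union_right _ hK)) φ q).mp (hcon q hq)
    exact Nat.find_min hex (hsz ▸ hlt) ⟨φ', hSep', rfl⟩
  by_cases hm : β ∈ MLSub α
  · have hm' : α ∉ MLSub β := by
      intro hm2
      rcases eq_or_csize_lt_of_mem_MLSub hm with h | h1
      · exact hne h.symm
      · rcases eq_or_csize_lt_of_mem_MLSub hm2 with h | h2
        · exact hne h
        · omega
    exact key β α hβm hαm hne.symm hm' fun K hK q => (hsem K hK q).symm
  · exact key α β hαm hβm hne hm hsem
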